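/- arXiv:2005.02950 — 4 statements merged into one kernel-verified Lean document; each statement's English description precedes it below -/
import Mathlib

section
/- If X follows a d-dimensional elliptical distribution with density generator g, location vector μ and positive definite dispersion matrix Σ, then the conditional distribution of the first d-1 components given that the sum equals K is elliptical in dimension d-1 with location vector μ_K = μ' + ((K − μ_S)/σ_S²)(Σ1_d)', dispersion matrix Σ_K = Σ' − (1/σ_S²)(Σ1_d)'((Σ1_d)')^T, and density generator g_K(t) = g(t + Δ_K) where Δ_K = (1/2)((K − μ_S)/σ_S)², μ_S = 1_d^T μ and σ_S² = 1_d^T Σ 1_d. -/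
open Finset Matrix

def Pmat (n : ℕ) : Matrix (Fin (n+1)) (Fin n) ℝ :=
  Matrix.of fun i j => (if i = j.castSucc then 1 else 0) - (if i = Fin.last n then 1 else 0)

lemma Pmat_mulVec {n : ℕ} (u : Fin n → ℝ) :
    Pmat n *ᵥ u = Fin.snoc u (-∑ j, u j) := by
  funext i
  refine Fin.lastCases ?_ ?_ i
  · simp [Pmat, Matrix.mulVec, dotProduct, sub_mul, Finset.sum_sub_distrib,
      (Fin.castSucc_lt_last _).ne']
  · intro k
    simp [Pmat, Matrix.mulVec, dotProduct, sub_mul, Finset.sum_sub_distrib,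
      Fin.castSucc_inj, (Fin.castSucc_lt_last k).ne]

lemma PtAP {n : ℕ} (A : Matrix (Fin (n+1)) (Fin (n+1)) ℝ) (i j : Fin n) :
    ((Pmat n)ᵀ * A * Pmat n) i j = A i.castSucc j.castSucc - A i.castSucc (Fin.last n)
      - A (Fin.last n) j.castSucc + A (Fin.last n) (Fin.last n) := by
  simp only [Matrix.mul_apply, Matrix.transpose_apply, Pmat, Matrix.of_apply]
  simp [sub_mul, mul_sub, Finset.sum_sub_distrib, (Fin.castSucc_lt_last _).ne,
    (Fin.castSucc_lt_last _).ne', Finset.mul_sum]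
  ring

lemma quad_snoc {n : ℕ} (A : Matrix (Fin (n+1)) (Fin (n+1)) ℝ) (u : Fin n → ℝ) :
    (Fin.snoc u (-∑ j, u j) : Fin (n+1) → ℝ) ⬝ᵥ A *ᵥ (Fin.snoc u (-∑ j, u j)) =
      u ⬝ᵥ ((Pmat n)ᵀ * A * Pmat n) *ᵥ u := by
  rw [← Pmat_mulVec, ← Matrix.mulVec_mulVec, ← Matrix.mulVec_mulVec,
    Matrix.dotProduct_mulVec u, Matrix.vecMul_transpose]

lemma key_inv {n : ℕ} (Sg : Matrix (Fin (n+1)) (Fin (n+1)) ℝ) (hSg : Sg.PosDef)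
    (σ : ℝ) (hσ : σ = ∑ i, ∑ j, Sg i j) (hσne : σ ≠ 0)
    (SgK : Matrix (Fin n) (Fin n) ℝ)
    (hSgK : SgK = fun i j => Sg i.castSucc j.castSucc -
      (1 / σ) * ((Sg *ᵥ 1) i.castSucc * (Sg *ᵥ 1) j.castSucc)) :
    SgK * ((Pmat n)ᵀ * Sg⁻¹ * Pmat n) = 1 := by
  classical
  set A := Sg⁻¹ with hAdef
  set w := Sg *ᵥ (1 : Fin (n+1) → ℝ) with hwdef
  set lst := Fin.last n with hlst
  have hdetu : IsUnit Sg.det := isUnit_iff_ne_zero.2 (ne_of_gt hSg.det_pos)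
  have hSA : Sg * A = 1 := Matrix.mul_nonsing_inv _ hdetu
  have hAS : A * Sg = 1 := Matrix.nonsing_inv_mul _ hdetu
  have hsymm : ∀ k l, Sg k l = Sg l k := by
    intro k l
    have := congrFun (congrFun hSg.isHermitian k) l
    simpa [Matrix.conjTranspose_apply] using this.symm
  have hAherm : A.IsHermitian := hSg.isHermitian.inv
  have hAsym : ∀ k l, A k l = A l k := by
    intro k l
    have := congrFun (congrFun hAherm k) l
    simpa [Matrix.conjTranspose_apply] using this.symm
  have hw_row : ∀ i, w i = ∑ k, Sg i k := by
    intro i; simp [hwdef, Matrix.mulVec, dotProduct]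
  have hσw : σ = ∑ k, w k := by
    rw [hσ]; exact Finset.sum_congr rfl fun k _ => (hw_row k).symm
  have hAw : A *ᵥ w = 1 := by
    rw [hwdef, Matrix.mulVec_mulVec, hAS, Matrix.one_mulVec]
  have hAw' : ∀ j, ∑ k, A j k * w k = 1 := by
    intro j
    have := congrFun hAw j
    simpa [Matrix.mulVec, dotProduct] using this
  have h4 : ∀ j, ∑ k, w k * A k j = 1 := by
    intro j
    rw [← hAw' j]
    exact Finset.sum_congr rfl fun k _ => by rw [mul_comm, hAsym]
  have hSA' : ∀ i j, ∑ k, Sg i k * A k j = if i = j then 1 else 0 := by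
    intro i j
    have := congrFun (congrFun hSA i) j
    simpa [Matrix.mul_apply, Matrix.one_apply] using this
  ext i j
  rw [Matrix.mul_apply]
  set G : Fin (n+1) → ℝ := fun k => (Sg i.castSucc k - 1/σ * (w i.castSucc * w k)) *
    (A k j.castSucc - A k lst - A lst j.castSucc + A lst lst) with hG
  have hentry : ∀ k : Fin n, SgK i k * ((Pmat n)ᵀ * A * Pmat n) k j = G k.castSucc := by
    intro k
    rw [hSgK, PtAP]
  have hGlast : G lst = 0 := by simp [hG]
  have hstep : ∑ k : Fin n, SgK i k * ((Pmat n)ᵀ * A * Pmat n) k j = ∑ k, G k := by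
    rw [Fin.sum_univ_castSucc (f := G), hGlast, add_zero]
    exact Finset.sum_congr rfl fun k _ => hentry k
  rw [hstep]
  have hGsum : ∑ k, G k = (∑ k, Sg i.castSucc k * A k j.castSucc)
      - (∑ k, Sg i.castSucc k * A k lst)
      - A lst j.castSucc * (∑ k, Sg i.castSucc k) + A lst lst * (∑ k, Sg i.castSucc k)
      - (1/σ) * w i.castSucc * ((∑ k, w k * A k j.castSucc) - (∑ k, w k * A k lst)
        - A lst j.castSucc * (∑ k, w k) + A lst lst * (∑ k, w k)) := by
    simp only [Finset.mul_sum, ← Finset.sum_sub_distrib, ← Finset.sum_add_distrib, hG]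
    exact Finset.sum_congr rfl fun k _ => by ring
  rw [hGsum, hSA', hSA', h4, h4, ← hw_row, ← hσw]
  have hne : i.castSucc ≠ lst := (Fin.castSucc_lt_last i).ne
  rw [if_neg hne]
  rw [Matrix.one_apply]
  by_cases hij : i = j
  · subst hij
    rw [if_pos rfl, if_pos rfl]
    field_simp
    ring
  · rw [if_neg (fun h => hij (Fin.castSucc_inj.mp h)), if_neg hij]
    field_simp
    ring

/-- If `X` is elliptical with location `μ`, positive definite dispersion `Sg` and density
generator `g`, then the conditional density of the first `n` components given that the sum
of all `n+1` components equals `K` is elliptical with location `μK`, dispersion `SgK` and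
density generator `g_K(t) = g(t + ΔK)`. -/
theorem ellipticality_conditional_constant_sum
    (n : ℕ) (μ : Fin (n + 1) → ℝ) (Sg : Matrix (Fin (n + 1)) (Fin (n + 1)) ℝ)
    (hSg : Sg.PosDef)
    (g : ℝ → ℝ) (c : ℝ) (hc : 0 < c)
    (f : (Fin (n + 1) → ℝ) → ℝ)
    (hf : ∀ x, f x = c / Real.sqrt Sg.det *
      g ((1 / 2) * ((x - μ) ⬝ᵥ Sg⁻¹ *ᵥ (x - μ))))
    (K fSK : ℝ) (hfSK : 0 < fSK)
    (μS σS2 : ℝ) (hμS : μS = ∑ j, μ j) (hσS2 : σS2 = ∑ i, ∑ j, Sg i j)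
    (μK : Fin n → ℝ)
    (hμK : μK = fun j => μ j.castSucc + (K - μS) / σS2 * (Sg *ᵥ 1) j.castSucc)
    (SgK : Matrix (Fin n) (Fin n) ℝ)
    (hSgK : SgK = fun i j => Sg i.castSucc j.castSucc -
      (1 / σS2) * ((Sg *ᵥ 1) i.castSucc * (Sg *ᵥ 1) j.castSucc))
    (ΔK : ℝ) (hΔK : ΔK = (1 / 2) * ((K - μS) / Real.sqrt σS2) ^ 2) :
    ∃ cK > 0, ∀ x' : Fin n → ℝ,
      f (Fin.snoc x' (K - ∑ j, x' j)) / fSK =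
        cK * g ((1 / 2) * ((x' - μK) ⬝ᵥ SgK⁻¹ *ᵥ (x' - μK)) + ΔK) := by
  classical
  have hdet : (0:ℝ) < Sg.det := hSg.det_pos
  have hdetu : IsUnit Sg.det := isUnit_iff_ne_zero.2 (ne_of_gt hdet)
  have hAS : Sg⁻¹ * Sg = 1 := Matrix.nonsing_inv_mul _ hdetu
  have hAherm : (Sg⁻¹).IsHermitian := hSg.isHermitian.inv
  have hAT : (Sg⁻¹)ᵀ = Sg⁻¹ := by
    have := hAherm
    simpa [Matrix.IsHermitian, Matrix.conjTranspose_eq_transpose_of_trivial] using this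
  have hw_row : ∀ i, (Sg *ᵥ (1 : Fin (n+1) → ℝ)) i = ∑ k, Sg i k := by
    intro i; simp [Matrix.mulVec, dotProduct]
  have hσw : σS2 = ∑ k, (Sg *ᵥ (1 : Fin (n+1) → ℝ)) k := by
    rw [hσS2]; exact Finset.sum_congr rfl fun k _ => (hw_row k).symm
  have hσpos : 0 < σS2 := by
    have h1ne : (1 : Fin (n+1) → ℝ) ≠ 0 := by
      intro h; exact one_ne_zero (congrFun h 0)
    have h := hSg.dotProduct_mulVec_pos h1ne
    rw [hσw]
    simpa [dotProduct] using h
  have hσne : σS2 ≠ 0 := ne_of_gt hσpos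
  have hAw : Sg⁻¹ *ᵥ (Sg *ᵥ (1 : Fin (n+1) → ℝ)) = 1 := by
    rw [Matrix.mulVec_mulVec, hAS, Matrix.one_mulVec]
  have hwA : (Sg *ᵥ (1 : Fin (n+1) → ℝ)) ᵥ* Sg⁻¹ = 1 := by
    rw [← hAT, Matrix.vecMul_transpose]
    exact hAw
  have hSgKinv : SgK⁻¹ = (Pmat n)ᵀ * Sg⁻¹ * Pmat n :=
    Matrix.inv_eq_right_inv (key_inv Sg hSg σS2 hσS2 hσne SgK hSgK)
  have hsq : 0 < Real.sqrt Sg.det := Real.sqrt_pos.2 hdet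
  refine ⟨c / Real.sqrt Sg.det / fSK, div_pos (div_pos hc hsq) hfSK, fun x' => ?_⟩
  set t : ℝ := (K - μS) / σS2 with htdef
  set u : Fin n → ℝ := x' - μK with hudef
  set z : Fin (n+1) → ℝ := Fin.snoc u (-∑ j, u j) with hzdef
  have ht : t * σS2 = K - μS := div_mul_cancel₀ _ hσne
  have hμsum : ∑ j : Fin n, μ j.castSucc = μS - μ (Fin.last n) := by
    rw [hμS, Fin.sum_univ_castSucc]; ring
  have hwsum : ∑ j : Fin n, (Sg *ᵥ (1 : Fin (n+1) → ℝ)) j.castSucc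
      = σS2 - (Sg *ᵥ (1 : Fin (n+1) → ℝ)) (Fin.last n) := by
    rw [hσw, Fin.sum_univ_castSucc]; ring
  have hv : (Fin.snoc x' (K - ∑ j, x' j) - μ : Fin (n+1) → ℝ)
      = z + t • (Sg *ᵥ (1 : Fin (n+1) → ℝ)) := by
    funext i
    refine Fin.lastCases ?_ (fun k => ?_) i
    · simp only [Pi.sub_apply, Pi.add_apply, Pi.smul_apply, smul_eq_mul, hzdef,
        Fin.snoc_last, hudef, hμK, Finset.sum_sub_distrib, Finset.sum_add_distrib,
        ← Finset.mul_sum, hμsum, hwsum]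
      nlinarith [ht]
    · simp only [Pi.sub_apply, Pi.add_apply, Pi.smul_apply, smul_eq_mul, hzdef,
        Fin.snoc_castSucc, hudef, hμK]
      ring
  have hsumz : ∑ j, z j = 0 := by
    rw [hzdef, Fin.sum_univ_castSucc]
    simp
  have hz1 : z ⬝ᵥ (1 : Fin (n+1) → ℝ) = 0 := by
    simpa [dotProduct] using hsumz
  have h1z : (1 : Fin (n+1) → ℝ) ⬝ᵥ z = 0 := by
    simpa [dotProduct] using hsumz
  have hw1 : (Sg *ᵥ (1 : Fin (n+1) → ℝ)) ⬝ᵥ (1 : Fin (n+1) → ℝ) = σS2 := by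
    rw [hσw]; simp [dotProduct]
  have hqv : (Fin.snoc x' (K - ∑ j, x' j) - μ : Fin (n+1) → ℝ) ⬝ᵥ
        Sg⁻¹ *ᵥ (Fin.snoc x' (K - ∑ j, x' j) - μ)
      = u ⬝ᵥ ((Pmat n)ᵀ * Sg⁻¹ * Pmat n) *ᵥ u + t^2 * σS2 := by
    rw [hv, Matrix.mulVec_add, Matrix.mulVec_smul, hAw, add_dotProduct, dotProduct_add,
      dotProduct_add, smul_dotProduct, smul_dotProduct, dotProduct_smul, dotProduct_smul,
      Matrix.dotProduct_mulVec (Sg *ᵥ 1), hwA, hz1, h1z, hw1]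
    have hquad : z ⬝ᵥ Sg⁻¹ *ᵥ z = u ⬝ᵥ ((Pmat n)ᵀ * Sg⁻¹ * Pmat n) *ᵥ u := by
      rw [hzdef]; exact quad_snoc Sg⁻¹ u
    rw [hquad]
    simp only [smul_eq_mul]
    field_simp
    ring
  rw [hf]
  have harg : (1 / 2) * ((Fin.snoc x' (K - ∑ j, x' j) - μ : Fin (n+1) → ℝ) ⬝ᵥ
        Sg⁻¹ *ᵥ (Fin.snoc x' (K - ∑ j, x' j) - μ))
      = (1 / 2) * ((x' - μK) ⬝ᵥ SgK⁻¹ *ᵥ (x' - μK)) + ΔK := by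
    rw [hqv, hSgKinv, ← hudef, hΔK]
    have hsqrt : ((K - μS) / Real.sqrt σS2) ^ 2 = (K - μS)^2 / σS2 := by
      rw [div_pow, Real.sq_sqrt hσpos.le]
    rw [hsqrt, htdef]
    field_simp
  rw [harg, mul_div_right_comm]
end

section
/- For an elliptical random vector X = (X_1,…,X_d) ~ E_d(μ, Σ, ψ) with finite second moments, the conditional covariance of X_i and X_j given {S = K} equals σ_i σ_j (ρ_{X_i,X_j} − ρ_{X_i,S} ρ_{X_j,S}), where σ_j² = Var(X_j), ρ_{X_i,X_j} is the correlation of X_i and X_j, and ρ_{X_j,S} is the correlation of X_j with S = X_1+···+X_d. -/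
open Finset Matrix

/-- For an elliptical random vector with dispersion `Sg` (covariance `C = a • Sg`), the
conditional covariance of `X_i` and `X_j` given `{S = K}` (which is `a • ΣK`) equals
`σ_i σ_j (ρ_{ij} − ρ_{iS} ρ_{jS})`. -/
theorem conditional_covariance_elliptical
    (n : ℕ) (Sg : Matrix (Fin (n + 1)) (Fin (n + 1)) ℝ) (hSg : Sg.PosDef)
    (a : ℝ) (ha : 0 < a)
    (C : Matrix (Fin (n + 1)) (Fin (n + 1)) ℝ) (hC : C = a • Sg)
    (σS2 : ℝ) (hσS2 : σS2 = ∑ i, ∑ j, Sg i j)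
    (SgK : Matrix (Fin n) (Fin n) ℝ)
    (hSgK : SgK = fun i j => Sg i.castSucc j.castSucc -
      (1 / σS2) * ((Sg *ᵥ 1) i.castSucc * (Sg *ᵥ 1) j.castSucc))
    (CK : Matrix (Fin n) (Fin n) ℝ) (hCK : CK = a • SgK)
    (σ : Fin (n + 1) → ℝ) (hσ : ∀ j, σ j = Real.sqrt (C j j))
    (σS : ℝ) (hσS : σS = Real.sqrt (∑ i, ∑ j, C i j))
    (ρ : Fin (n + 1) → Fin (n + 1) → ℝ) (hρ : ∀ i j, ρ i j = C i j / (σ i * σ j))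
    (ρS : Fin (n + 1) → ℝ) (hρS : ∀ j, ρS j = (∑ k, C j k) / (σ j * σS)) :
    ∀ i j : Fin n, CK i j = σ i.castSucc * σ j.castSucc *
      (ρ i.castSucc j.castSucc - ρS i.castSucc * ρS j.castSucc) := by
  intro i j
  have hS2pos : 0 < σS2 := by
    rw [hσS2]
    have h := hSg.dotProduct_mulVec_pos (x := 1) (by simp [funext_iff])
    simpa [dotProduct, mulVec, mul_comm, Finset.mul_sum] using h
  have hdiag : ∀ k, 0 < Sg k k := by
    intro k
    have h := hSg.dotProduct_mulVec_pos (x := Pi.single k 1) (by simp [funext_iff]; exact ⟨k, by simp⟩)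
    simpa [dotProduct, mulVec, Pi.single_apply] using h
  have hσpos : ∀ k, 0 < σ k := by
    intro k
    rw [hσ, hC]
    exact Real.sqrt_pos.2 (by simpa using mul_pos ha (hdiag k))
  have hsumC : ∑ i, ∑ j, C i j = a * σS2 := by
    simp [hC, hσS2, Finset.mul_sum]
  have hσSpos : 0 < σS := by
    rw [hσS, hsumC]
    exact Real.sqrt_pos.2 (mul_pos ha hS2pos)
  have hσSsq : σS * σS = a * σS2 := by
    rw [hσS, hsumC]
    exact Real.mul_self_sqrt (le_of_lt (mul_pos ha hS2pos))
  have hrow : ∀ k, ∑ l, C k l = a * (Sg *ᵥ 1) k := by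
    intro k
    simp [hC, mulVec, dotProduct, Finset.mul_sum]
  set i' := i.castSucc
  set j' := j.castSucc
  have hi0 : σ i' ≠ 0 := (hσpos i').ne'
  have hj0 : σ j' ≠ 0 := (hσpos j').ne'
  have hS0 : σS ≠ 0 := hσSpos.ne'
  have key : σ i' * σ j' * (ρ i' j' - ρS i' * ρS j') =
      C i' j' - (a * (Sg *ᵥ 1) i') * (a * (Sg *ᵥ 1) j') / (a * σS2) := by
    rw [hρ, hρS, hρS, ← hrow, ← hrow, ← hσSsq]
    field_simp
  rw [key, hCK, hSgK, hC]
  simp only [Matrix.smul_apply, Pi.smul_apply, smul_eq_mul]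
  show a * (Sg i' j' - (1 / σS2) * ((Sg *ᵥ 1) i' * (Sg *ᵥ 1) j')) = _
  field_simp
end

section
/- If X ~ E_d(μ, Σ, ψ) admits a density with a density generator g that is decreasing on [0,∞), then the conditional density of (X_1,…,X_{d-1}) given {S = K} is convex unimodal, i.e., all of its superlevel sets are convex. -/
open Finset Matrix

/-- Symmetry of the bilinear form of a symmetric matrix. -/
lemma quad_symm {m : Type*} [Fintype m] (M : Matrix m m ℝ) (hsym : Mᵀ = M)
    (u v : m → ℝ) : u ⬝ᵥ M *ᵥ v = v ⬝ᵥ M *ᵥ u := by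
  have hM' : ∀ i j, M i j = M j i := fun i j => by
    simpa using congrFun (congrFun hsym j) i
  simp only [dotProduct, Matrix.mulVec, Finset.mul_sum]
  rw [Finset.sum_comm]
  refine Finset.sum_congr rfl fun j _ => Finset.sum_congr rfl fun i _ => ?_
  rw [hM' j i]; ring

/-- A PSD quadratic form evaluated at a convex combination is at most the max of the values. -/
lemma quad_le_max {m : Type*} [Fintype m] (M : Matrix m m ℝ) (hsym : Mᵀ = M)
    (hpsd : ∀ w : m → ℝ, 0 ≤ w ⬝ᵥ M *ᵥ w) (u v : m → ℝ) (a b : ℝ)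
    (ha : 0 ≤ a) (hb : 0 ≤ b) (hab : a + b = 1) :
    (a • u + b • v) ⬝ᵥ M *ᵥ (a • u + b • v) ≤ max (u ⬝ᵥ M *ᵥ u) (v ⬝ᵥ M *ᵥ v) := by
  have hBsymm := quad_symm M hsym u v
  have hsub := hpsd (u - v)
  have hexp : (u - v) ⬝ᵥ M *ᵥ (u - v)
      = u ⬝ᵥ M *ᵥ u - u ⬝ᵥ M *ᵥ v - v ⬝ᵥ M *ᵥ u + v ⬝ᵥ M *ᵥ v := by
    simp [Matrix.mulVec_sub, dotProduct_sub, sub_dotProduct]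
    ring
  have hz : (a • u + b • v) ⬝ᵥ M *ᵥ (a • u + b • v)
      = a * a * (u ⬝ᵥ M *ᵥ u) + a * b * (u ⬝ᵥ M *ᵥ v) + b * a * (v ⬝ᵥ M *ᵥ u)
        + b * b * (v ⬝ᵥ M *ᵥ v) := by
    simp [Matrix.mulVec_add, Matrix.mulVec_smul, dotProduct_add,
      add_dotProduct, smul_dotProduct, dotProduct_smul, smul_eq_mul]
    ring
  have hle : (a • u + b • v) ⬝ᵥ M *ᵥ (a • u + b • v)
      ≤ a * (u ⬝ᵥ M *ᵥ u) + b * (v ⬝ᵥ M *ᵥ v) := by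
    rw [hz]
    have hsub' : 0 ≤ u ⬝ᵥ M *ᵥ u - 2 * (u ⬝ᵥ M *ᵥ v) + v ⬝ᵥ M *ᵥ v := by
      rw [hexp] at hsub; linarith [hBsymm]
    have hb' : b = 1 - a := by linarith
    subst hb'
    nlinarith [mul_nonneg (mul_nonneg ha hb) hsub']
  refine hle.trans ?_
  have hb' : b = 1 - a := by linarith
  subst hb'
  rcases le_total (u ⬝ᵥ M *ᵥ u) (v ⬝ᵥ M *ᵥ v) with h | h
  · rw [max_eq_right h]
    nlinarith [mul_nonneg ha (sub_nonneg.mpr h)]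
  · rw [max_eq_left h]
    nlinarith [mul_nonneg hb (sub_nonneg.mpr h)]


/-- If `X` is elliptical with a density generator `g` decreasing on `[0, ∞)`, then the
conditional density of the first `n` components given `{S = K}` is convex unimodal:
all of its superlevel sets are convex. -/
theorem convex_unimodality_conditional_elliptical
    (n : ℕ) (μ : Fin (n + 1) → ℝ) (Sg : Matrix (Fin (n + 1)) (Fin (n + 1)) ℝ)
    (hSg : Sg.PosDef)
    (g : ℝ → ℝ) (hg : AntitoneOn g (Set.Ici 0))
    (c : ℝ) (hc : 0 < c)
    (f : (Fin (n + 1) → ℝ) → ℝ)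
    (hf : ∀ x, f x = c / Real.sqrt Sg.det *
      g ((1 / 2) * ((x - μ) ⬝ᵥ Sg⁻¹ *ᵥ (x - μ))))
    (K fSK : ℝ) (hfSK : 0 < fSK) :
    ∀ t : ℝ, 0 < t →
      Convex ℝ {x' : Fin n → ℝ | t ≤ f (Fin.snoc x' (K - ∑ j, x' j)) / fSK} := by
  intro t _ x hx y hy a b ha hb hab
  simp only [Set.mem_setOf_eq] at hx hy ⊢
  set M := Sg⁻¹ with hMdef
  have hM : M.PosDef := hSg.inv
  have hsym : Mᵀ = M := by
    have := hM.1
    simpa [Matrix.IsHermitian, Matrix.conjTranspose_eq_transpose_of_trivial] using this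
  have hpsd : ∀ w : Fin (n + 1) → ℝ, 0 ≤ w ⬝ᵥ M *ᵥ w := by
    intro w
    by_cases hw : w = 0
    · simp [hw]
    · exact le_of_lt (by simpa using hM.dotProduct_mulVec_pos hw)
  set C : ℝ := c / Real.sqrt Sg.det with hCdef
  have hC : 0 < C := div_pos hc (Real.sqrt_pos.mpr hSg.det_pos)
  -- the affine map to the centered full vector
  set φ : (Fin n → ℝ) → (Fin (n + 1) → ℝ) :=
    fun w => Fin.snoc w (K - ∑ j, w j) - μ with hφdef
  have hφaff : φ (a • x + b • y) = a • φ x + b • φ y := by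
    funext i
    refine Fin.lastCases ?_ ?_ i
    · simp only [hφdef, Pi.sub_apply, Pi.add_apply, Pi.smul_apply, Fin.snoc_last,
        smul_eq_mul, Finset.sum_add_distrib, ← Finset.mul_sum]
      linear_combination (μ (Fin.last n) - K) * hab
    · intro i
      simp only [hφdef, Pi.sub_apply, Pi.add_apply, Pi.smul_apply, Fin.snoc_castSucc,
        smul_eq_mul]
      linear_combination μ i.castSucc * hab
  -- quadratic values
  set Qx : ℝ := (1 / 2) * (φ x ⬝ᵥ M *ᵥ φ x) with hQx
  set Qy : ℝ := (1 / 2) * (φ y ⬝ᵥ M *ᵥ φ y) with hQy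
  set Qz : ℝ := (1 / 2) * (φ (a • x + b • y) ⬝ᵥ M *ᵥ φ (a • x + b • y)) with hQz
  have hQxpos : (0:ℝ) ≤ Qx := by rw [hQx]; linarith [hpsd (φ x)]
  have hQypos : (0:ℝ) ≤ Qy := by rw [hQy]; linarith [hpsd (φ y)]
  have hQzpos : (0:ℝ) ≤ Qz := by rw [hQz]; linarith [hpsd (φ (a • x + b • y))]
  have hQzle : Qz ≤ max Qx Qy := by
    have h2 := quad_le_max M hsym hpsd (φ x) (φ y) a b ha hb hab
    rw [hQz, hφaff, hQx, hQy]
    rcases le_total (φ x ⬝ᵥ M *ᵥ φ x) (φ y ⬝ᵥ M *ᵥ φ y) with h | h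
    · rw [max_eq_right h] at h2
      rw [max_eq_right (by linarith :
        1 / 2 * (φ x ⬝ᵥ M *ᵥ φ x) ≤ 1 / 2 * (φ y ⬝ᵥ M *ᵥ φ y))]
      linarith
    · rw [max_eq_left h] at h2
      rw [max_eq_left (by linarith :
        1 / 2 * (φ y ⬝ᵥ M *ᵥ φ y) ≤ 1 / 2 * (φ x ⬝ᵥ M *ᵥ φ x))]
      linarith
  have hfx : f (Fin.snoc x (K - ∑ j, x j)) = C * g Qx := by rw [hf]
  have hfy : f (Fin.snoc y (K - ∑ j, y j)) = C * g Qy := by rw [hf]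
  have hfz : f (Fin.snoc (a • x + b • y) (K - ∑ j, (a • x + b • y) j)) = C * g Qz := by
    rw [hf]
  rw [hfz]
  rw [hfx] at hx
  rw [hfy] at hy
  have key : g (max Qx Qy) ≤ g Qz :=
    hg hQzpos (le_max_iff.mpr (Or.inl hQxpos)) hQzle
  have hmax : t ≤ C * g (max Qx Qy) / fSK := by
    rcases le_total Qx Qy with h | h
    · rwa [max_eq_right h]
    · rwa [max_eq_left h]
  refine hmax.trans ?_
  gcongr
end

section
/- The bivariate density f(u,v) = (9/4)·1{(u,v) ∈ ∪_{i=1}^3 [(i−1)/3, i/3]²} + (9/4)·1{(u,v) ∈ [1/3,2/3]²} on [0,1]² has marginal densities f₁(u) = f₂(u) = (3/4)·1{u ∈ [0,1]} + (3/4)·1{u ∈ [1/3,2/3]} which are convex unimodal, yet its superlevel set at level 9/4 equals [0,1/3]² ∪ [1/3,2/3]² ∪ [2/3,1]², which is neither convex nor star-shaped. -/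
open MeasureTheory

/-- The square `[a,b] × [a,b]`. -/
def sqIcc (a b : ℝ) : Set (ℝ × ℝ) := Set.Icc a b ×ˢ Set.Icc a b

/-- The union of the three diagonal squares. -/
def threeSquares : Set (ℝ × ℝ) :=
  sqIcc 0 (1 / 3) ∪ sqIcc (1 / 3) (2 / 3) ∪ sqIcc (2 / 3) 1

/-- The bivariate density `f(u,v) = (9/4)·1{(u,v) ∈ ∪ᵢ squares} + (9/4)·1{(u,v) ∈ middle}`. -/
noncomputable def fJoint : ℝ × ℝ → ℝ := fun p =>
  (9 / 4 : ℝ) * Set.indicator threeSquares (fun _ => (1 : ℝ)) p +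
  (9 / 4 : ℝ) * Set.indicator (sqIcc (1 / 3) (2 / 3)) (fun _ => (1 : ℝ)) p

/-- The claimed marginal density `f₁(u) = (3/4)·1{u ∈ [0,1]} + (3/4)·1{u ∈ [1/3,2/3]}`. -/
noncomputable def fMarg : ℝ → ℝ := fun u =>
  (3 / 4 : ℝ) * Set.indicator (Set.Icc (0 : ℝ) 1) (fun _ => (1 : ℝ)) u +
  (3 / 4 : ℝ) * Set.indicator (Set.Icc (1 / 3 : ℝ) (2 / 3)) (fun _ => (1 : ℝ)) u

lemma mem_sq {p : ℝ × ℝ} {a b : ℝ} :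
    p ∈ sqIcc a b ↔ (a ≤ p.1 ∧ p.1 ≤ b) ∧ (a ≤ p.2 ∧ p.2 ≤ b) := Iff.rfl

lemma mem_TS (u v : ℝ) : (u, v) ∈ threeSquares ↔
    (0 ≤ u ∧ u ≤ 1/3 ∧ 0 ≤ v ∧ v ≤ 1/3) ∨
    (1/3 ≤ u ∧ u ≤ 2/3 ∧ 1/3 ≤ v ∧ v ≤ 2/3) ∨
    (2/3 ≤ u ∧ u ≤ 1 ∧ 2/3 ≤ v ∧ v ≤ 1) := by
  simp only [threeSquares, Set.mem_union, mem_sq]; tauto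

lemma mid_sub : sqIcc (1/3) (2/3) ⊆ threeSquares := fun _ hp => Or.inl (Or.inr hp)

lemma intIcc (a b c : ℝ) (h : a ≤ b) :
    ∫ v, Set.indicator (Set.Icc a b) (fun _ => c) v = c * (b - a) := by
  rw [MeasureTheory.integral_indicator_const _ measurableSet_Icc, Real.volume_real_Icc_of_le h,
    smul_eq_mul]
  ring

lemma marg_eq (u : ℝ) (h1 : u ≠ 1/3) (h2 : u ≠ 2/3) : (∫ v, fJoint (u, v)) = fMarg u := by
  rcases lt_or_ge u 0 with hu | hu0
  · -- u < 0 : everything vanishes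
    have hf : (fun v => fJoint (u, v)) = fun _ => (0 : ℝ) := by
      funext v
      have hTS : (u, v) ∉ threeSquares := by
        rw [mem_TS]; rintro (⟨h, _⟩ | ⟨h, _⟩ | ⟨h, _⟩) <;> linarith
      have hM : (u, v) ∉ sqIcc (1/3) (2/3) := fun h => hTS (mid_sub h)
      simp only [fJoint, Set.indicator_of_notMem hTS, Set.indicator_of_notMem hM]; ring
    have hA : u ∉ Set.Icc (0 : ℝ) 1 := fun hm => by rw [Set.mem_Icc] at hm; linarith
    have hB : u ∉ Set.Icc (1/3 : ℝ) (2/3) := fun hm => by rw [Set.mem_Icc] at hm; linarith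
    rw [hf]
    simp only [fMarg, Set.indicator_of_notMem hA, Set.indicator_of_notMem hB,
      integral_zero]
    ring
  · rcases lt_or_ge 1 u with hu | hu1
    · -- u > 1
      have hf : (fun v => fJoint (u, v)) = fun _ => (0 : ℝ) := by
        funext v
        have hTS : (u, v) ∉ threeSquares := by
          rw [mem_TS]; rintro (⟨_, h, _⟩ | ⟨_, h, _⟩ | ⟨_, h, _⟩) <;> linarith
        have hM : (u, v) ∉ sqIcc (1/3) (2/3) := fun h => hTS (mid_sub h)
        simp only [fJoint, Set.indicator_of_notMem hTS, Set.indicator_of_notMem hM]; ring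
      have hA : u ∉ Set.Icc (0 : ℝ) 1 := fun hm => by rw [Set.mem_Icc] at hm; linarith
      have hB : u ∉ Set.Icc (1/3 : ℝ) (2/3) := fun hm => by rw [Set.mem_Icc] at hm; linarith
      rw [hf]
      simp only [fMarg, Set.indicator_of_notMem hA, Set.indicator_of_notMem hB,
        integral_zero]
      ring
    · rcases lt_or_ge u (1/3) with hu3 | hu3
      · -- 0 ≤ u < 1/3
        have hTS : ∀ v : ℝ, (u, v) ∈ threeSquares ↔ v ∈ Set.Icc (0 : ℝ) (1/3) := by
          intro v
          rw [mem_TS, Set.mem_Icc]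
          constructor
          · rintro (⟨_, _, h3, h4⟩ | ⟨h, _⟩ | ⟨h, _⟩)
            · exact ⟨h3, h4⟩
            · exfalso; linarith
            · exfalso; linarith
          · intro hv; exact Or.inl ⟨hu0, hu3.le, hv.1, hv.2⟩
        have hM : ∀ v : ℝ, (u, v) ∉ sqIcc (1/3) (2/3) := fun v hm => by
          rw [mem_sq] at hm; have := hm.1.1; simp only at this; linarith
        have hf : (fun v => fJoint (u, v)) =
            Set.indicator (Set.Icc (0 : ℝ) (1/3)) (fun _ => (9/4 : ℝ)) := by
          funext v
          simp only [fJoint, Set.indicator_of_notMem (hM v)]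
          by_cases hv : v ∈ Set.Icc (0 : ℝ) (1/3)
          · rw [Set.indicator_of_mem ((hTS v).mpr hv), Set.indicator_of_mem hv]; ring
          · rw [Set.indicator_of_notMem (fun h => hv ((hTS v).mp h)),
              Set.indicator_of_notMem hv]; ring
        have hA : u ∈ Set.Icc (0 : ℝ) 1 := Set.mem_Icc.mpr ⟨hu0, hu1⟩
        have hB : u ∉ Set.Icc (1/3 : ℝ) (2/3) := fun hm => by rw [Set.mem_Icc] at hm; linarith
        rw [hf, intIcc _ _ _ (by norm_num)]
        simp only [fMarg, Set.indicator_of_mem hA, Set.indicator_of_notMem hB]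
        norm_num
      · have hu3' : 1/3 < u := lt_of_le_of_ne hu3 (Ne.symm h1)
        rcases lt_or_ge u (2/3) with hu6 | hu6
        · -- 1/3 < u < 2/3
          have hTS : ∀ v : ℝ, (u, v) ∈ threeSquares ↔ v ∈ Set.Icc (1/3 : ℝ) (2/3) := by
            intro v
            rw [mem_TS, Set.mem_Icc]
            constructor
            · rintro (⟨_, h, _⟩ | ⟨_, _, h3, h4⟩ | ⟨h, _⟩)
              · exfalso; linarith
              · exact ⟨h3, h4⟩
              · exfalso; linarith
            · intro hv; exact Or.inr (Or.inl ⟨hu3'.le, hu6.le, hv.1, hv.2⟩)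
          have hM : ∀ v : ℝ, (u, v) ∈ sqIcc (1/3) (2/3) ↔ v ∈ Set.Icc (1/3 : ℝ) (2/3) := by
            intro v
            rw [mem_sq, Set.mem_Icc]
            exact ⟨fun h => h.2, fun h => ⟨⟨hu3'.le, hu6.le⟩, h⟩⟩
          have hf : (fun v => fJoint (u, v)) =
              Set.indicator (Set.Icc (1/3 : ℝ) (2/3)) (fun _ => (9/2 : ℝ)) := by
            funext v
            simp only [fJoint]
            by_cases hv : v ∈ Set.Icc (1/3 : ℝ) (2/3)
            · rw [Set.indicator_of_mem ((hTS v).mpr hv),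
                Set.indicator_of_mem ((hM v).mpr hv), Set.indicator_of_mem hv]; ring
            · rw [Set.indicator_of_notMem (fun h => hv ((hTS v).mp h)),
                Set.indicator_of_notMem (fun h => hv ((hM v).mp h)),
                Set.indicator_of_notMem hv]; ring
          have hA : u ∈ Set.Icc (0 : ℝ) 1 := Set.mem_Icc.mpr ⟨hu0, hu1⟩
          have hB : u ∈ Set.Icc (1/3 : ℝ) (2/3) := Set.mem_Icc.mpr ⟨hu3'.le, hu6.le⟩
          rw [hf, intIcc _ _ _ (by norm_num)]
          simp only [fMarg, Set.indicator_of_mem hA, Set.indicator_of_mem hB]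
          norm_num
        · -- 2/3 < u ≤ 1
          have hu6' : 2/3 < u := lt_of_le_of_ne hu6 (Ne.symm h2)
          have hTS : ∀ v : ℝ, (u, v) ∈ threeSquares ↔ v ∈ Set.Icc (2/3 : ℝ) 1 := by
            intro v
            rw [mem_TS, Set.mem_Icc]
            constructor
            · rintro (⟨_, h, _⟩ | ⟨_, h, _⟩ | ⟨_, _, h3, h4⟩)
              · exfalso; linarith
              · exfalso; linarith
              · exact ⟨h3, h4⟩
            · intro hv; exact Or.inr (Or.inr ⟨hu6'.le, hu1, hv.1, hv.2⟩)
          have hM : ∀ v : ℝ, (u, v) ∉ sqIcc (1/3) (2/3) := fun v hm => by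
            rw [mem_sq] at hm; have := hm.1.2; simp only at this; linarith
          have hf : (fun v => fJoint (u, v)) =
              Set.indicator (Set.Icc (2/3 : ℝ) 1) (fun _ => (9/4 : ℝ)) := by
            funext v
            simp only [fJoint, Set.indicator_of_notMem (hM v)]
            by_cases hv : v ∈ Set.Icc (2/3 : ℝ) 1
            · rw [Set.indicator_of_mem ((hTS v).mpr hv), Set.indicator_of_mem hv]; ring
            · rw [Set.indicator_of_notMem (fun h => hv ((hTS v).mp h)),
                Set.indicator_of_notMem hv]; ring
          have hA : u ∈ Set.Icc (0 : ℝ) 1 := Set.mem_Icc.mpr ⟨hu0, hu1⟩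
          have hB : u ∉ Set.Icc (1/3 : ℝ) (2/3) := fun hm => by
            rw [Set.mem_Icc] at hm; linarith
          rw [hf, intIcc _ _ _ (by norm_num)]
          simp only [fMarg, Set.indicator_of_mem hA, Set.indicator_of_notMem hB]
          norm_num

lemma fJoint_swap (u v : ℝ) : fJoint (u, v) = fJoint (v, u) := by
  have h : ∀ a b : ℝ, ((u, v) ∈ sqIcc a b) ↔ ((v, u) ∈ sqIcc a b) := by
    intro a b; rw [mem_sq, mem_sq]; exact and_comm
  have hTS : ((u, v) ∈ threeSquares) ↔ ((v, u) ∈ threeSquares) := by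
    simp only [threeSquares, Set.mem_union, h]
  simp only [fJoint]
  have e1 : threeSquares.indicator (fun _ => (1:ℝ)) (u, v)
      = threeSquares.indicator (fun _ => (1:ℝ)) (v, u) := by
    by_cases h1 : (u, v) ∈ threeSquares
    · rw [Set.indicator_of_mem h1, Set.indicator_of_mem (hTS.mp h1)]
    · rw [Set.indicator_of_notMem h1, Set.indicator_of_notMem (fun hh => h1 (hTS.mpr hh))]
  have e2 : (sqIcc (1/3) (2/3)).indicator (fun _ => (1:ℝ)) (u, v)
      = (sqIcc (1/3) (2/3)).indicator (fun _ => (1:ℝ)) (v, u) := by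
    by_cases h1 : (u, v) ∈ sqIcc (1/3) (2/3)
    · rw [Set.indicator_of_mem h1, Set.indicator_of_mem ((h _ _).mp h1)]
    · rw [Set.indicator_of_notMem h1,
        Set.indicator_of_notMem (fun hh => h1 ((h _ _).mpr hh))]
  rw [e1, e2]

/-- The bivariate density `fJoint` has (a.e.) marginal densities `fMarg` in both
coordinates, which are convex unimodal, yet its superlevel set at level `9/4` is the union
of the three diagonal squares, which is neither convex nor star-shaped. -/
theorem marginal_unimodality_does_not_imply_joint_unimodality :
    (∀ᵐ u ∂(volume : Measure ℝ), (∫ v, fJoint (u, v)) = fMarg u) ∧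
    (∀ᵐ v ∂(volume : Measure ℝ), (∫ u, fJoint (u, v)) = fMarg v) ∧
    (∀ t : ℝ, 0 < t → Convex ℝ {u : ℝ | t ≤ fMarg u}) ∧
    {p : ℝ × ℝ | (9 / 4 : ℝ) ≤ fJoint p} = threeSquares ∧
    ¬ Convex ℝ threeSquares ∧
    ¬ ∃ x₀ ∈ threeSquares, ∀ y ∈ threeSquares, segment ℝ x₀ y ⊆ threeSquares := by
  have key : ∀ᵐ u ∂(volume : Measure ℝ), (∫ v, fJoint (u, v)) = fMarg u := by
    refine MeasureTheory.ae_iff.mpr (measure_mono_null ?_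
      (Set.Finite.measure_zero (Set.toFinite ({1/3, 2/3} : Set ℝ)) _))
    intro u hu
    simp only [Set.mem_setOf_eq] at hu
    by_contra hne
    simp only [Set.mem_insert_iff, Set.mem_singleton_iff, not_or] at hne
    exact hu (marg_eq u hne.1 hne.2)
  refine ⟨key, ?_, ?_, ?_, ?_, ?_⟩
  · -- second marginal
    filter_upwards [key] with v hv
    rw [show (∫ u, fJoint (u, v)) = ∫ u, fJoint (v, u) from
      integral_congr_ae (Filter.Eventually.of_forall fun x => fJoint_swap x v), hv]
  · -- convex superlevel sets of fMarg
    intro t ht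
    have indA : ∀ u : ℝ, Set.indicator (Set.Icc (0:ℝ) 1) (fun _ => (1:ℝ)) u ≤ 1 := by
      intro u; by_cases hm : u ∈ Set.Icc (0:ℝ) 1 <;> simp [hm]
    have indB : ∀ u : ℝ, Set.indicator (Set.Icc (1/3:ℝ) (2/3)) (fun _ => (1:ℝ)) u ≤ 1 := by
      intro u
      by_cases hm : u ∈ Set.Icc (1/3:ℝ) (2/3)
      · rw [Set.indicator_of_mem hm]
      · rw [Set.indicator_of_notMem hm]; norm_num
    rcases le_or_gt t (3/4) with h34 | h34
    · have hset : {u : ℝ | t ≤ fMarg u} = Set.Icc (0:ℝ) 1 := by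
        ext u
        simp only [Set.mem_setOf_eq, Set.mem_Icc]
        constructor
        · intro hle
          by_contra hnot
          have hA : u ∉ Set.Icc (0:ℝ) 1 := fun hm => hnot (Set.mem_Icc.mp hm)
          have hB : u ∉ Set.Icc (1/3:ℝ) (2/3) := fun hm => by
            rw [Set.mem_Icc] at hm
            exact hnot ⟨by linarith [hm.1], by linarith [hm.2]⟩
          simp only [fMarg, Set.indicator_of_notMem hA, Set.indicator_of_notMem hB] at hle
          linarith
        · intro hm
          have hA : u ∈ Set.Icc (0:ℝ) 1 := Set.mem_Icc.mpr hm
          have hnn : (0:ℝ) ≤ Set.indicator (Set.Icc (1/3:ℝ) (2/3)) (fun _ => (1:ℝ)) u :=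
            Set.indicator_nonneg (fun _ _ => zero_le_one) u
          simp only [fMarg, Set.indicator_of_mem hA]
          linarith
      rw [hset]; exact convex_Icc _ _
    · rcases le_or_gt t (3/2) with h32 | h32
      · have hset : {u : ℝ | t ≤ fMarg u} = Set.Icc (1/3:ℝ) (2/3) := by
          ext u
          simp only [Set.mem_setOf_eq]
          constructor
          · intro hle
            by_contra hB
            simp only [fMarg, Set.indicator_of_notMem hB] at hle
            have := indA u
            linarith
          · intro hm
            have hm' := Set.mem_Icc.mp hm
            have hA : u ∈ Set.Icc (0:ℝ) 1 :=
              Set.mem_Icc.mpr ⟨by linarith [hm'.1], by linarith [hm'.2]⟩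
            simp only [fMarg, Set.indicator_of_mem hA, Set.indicator_of_mem hm]
            linarith
        rw [hset]; exact convex_Icc _ _
      · have hset : {u : ℝ | t ≤ fMarg u} = (∅ : Set ℝ) := by
          ext u
          simp only [Set.mem_setOf_eq, Set.mem_empty_iff_false, iff_false, not_le]
          have hA := indA u
          have hB := indB u
          simp only [fMarg]
          linarith
        rw [hset]; exact convex_empty
  · -- superlevel set of fJoint at 9/4
    ext p
    simp only [Set.mem_setOf_eq]
    constructor
    · intro h
      by_contra hp
      have hM : p ∉ sqIcc (1/3) (2/3) := fun hm => hp (mid_sub hm)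
      simp only [fJoint, Set.indicator_of_notMem hp, Set.indicator_of_notMem hM] at h
      linarith
    · intro hp
      have hnn : (0:ℝ) ≤ Set.indicator (sqIcc (1/3) (2/3)) (fun _ => (1:ℝ)) p :=
        Set.indicator_nonneg (fun _ _ => zero_le_one) p
      simp only [fJoint, Set.indicator_of_mem hp]
      linarith
  · -- not convex
    intro hc
    have h1 : ((1/3 : ℝ), (0 : ℝ)) ∈ threeSquares :=
      (mem_TS _ _).mpr (Or.inl (by norm_num))
    have h2 : ((2/3 : ℝ), (1/3 : ℝ)) ∈ threeSquares :=
      (mem_TS _ _).mpr (Or.inr (Or.inl (by norm_num)))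
    have := hc h1 h2 (by norm_num : (0:ℝ) ≤ 1/2) (by norm_num : (0:ℝ) ≤ 1/2)
      (by norm_num : (1/2 : ℝ) + 1/2 = 1)
    simp only [Prod.smul_mk, smul_eq_mul, Prod.mk_add_mk] at this
    rw [mem_TS] at this
    rcases this with ⟨_, h, _⟩ | ⟨_, _, h, _⟩ | ⟨h, _⟩ <;> norm_num at h
  · -- not star-shaped
    rintro ⟨⟨a, b⟩, hx, hstar⟩
    have hx' := (mem_TS a b).mp hx
    rcases lt_or_ge b (2/3) with hb | hb
    · -- case b < 2/3 : shoot towards (1, 2/3)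
      have ha : a ≤ 2/3 := by
        rcases hx' with ⟨_, h, _⟩ | ⟨_, h, _⟩ | ⟨_, _, h, _⟩ <;> linarith
      have hy : ((1 : ℝ), (2/3 : ℝ)) ∈ threeSquares :=
        (mem_TS _ _).mpr (Or.inr (Or.inr (by norm_num)))
      have hane : (1 : ℝ) - a ≠ 0 := by intro h; linarith
      set t : ℝ := (5/6 - a) / (1 - a) with htdef
      have htt : t * (1 - a) = 5/6 - a := div_mul_cancel₀ _ hane
      have ht0 : 0 ≤ t := div_nonneg (by linarith) (by linarith)
      have htlt : t < 1 := (div_lt_one (by linarith)).mpr (by linarith)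
      have hp := hstar _ hy ⟨1 - t, t, by linarith, ht0, by ring, rfl⟩
      simp only [Prod.smul_mk, smul_eq_mul, Prod.mk_add_mk] at hp
      rw [mem_TS] at hp
      have hu : (1 - t) * a + t * 1 = 5/6 := by nlinarith [htt]
      have hv : (1 - t) * b + t * (2/3) < 2/3 := by nlinarith [htlt, hb]
      rcases hp with ⟨_, h, _⟩ | ⟨_, h, _⟩ | ⟨_, _, h, _⟩ <;> linarith
    · -- case b ≥ 2/3 : shoot towards (0, 1/3)
      have ha : 1/3 ≤ a := by
        rcases hx' with ⟨_, _, _, h⟩ | ⟨h, _⟩ | ⟨h, _⟩ <;> linarith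
      have hy : ((0 : ℝ), (1/3 : ℝ)) ∈ threeSquares :=
        (mem_TS _ _).mpr (Or.inl (by norm_num))
      have hapos : (0 : ℝ) < a := by linarith
      set t : ℝ := 1 - 1 / (6 * a) with htdef
      have h6pos : (0 : ℝ) < 6 * a := by linarith
      have hfrac : 1 / (6 * a) ≤ 1/2 := by
        rw [div_le_div_iff₀ h6pos (by norm_num)]; linarith
      have hfracpos : 0 < 1 / (6 * a) := by positivity
      have ht0 : 0 ≤ t := by simp only [htdef]; linarith
      have htlt : t < 1 := by simp only [htdef]; linarith
      have hu : (1 - t) * a = 1/6 := by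
        simp only [htdef]
        field_simp
        ring
      have hp := hstar _ hy ⟨1 - t, t, by linarith, ht0, by ring, rfl⟩
      simp only [Prod.smul_mk, smul_eq_mul, Prod.mk_add_mk] at hp
      rw [mem_TS] at hp
      have hv : 1/3 < (1 - t) * b + t * (1/3) := by nlinarith [htlt, hb]
      rcases hp with ⟨_, _, _, h⟩ | ⟨h, _⟩ | ⟨h, _⟩ <;> linarith
end
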